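/- Let q = p^r be a prime power. For 0 ≤ k < q and natural numbers m, m' with m ≡ m' (mod q), one has binomial(m, k) ≡ binomial(m', k) (mod p). -/

import Mathlib

/-- Let `q = p^r` be a prime power. For `0 ≤ k < q` and natural numbers
`m, m'` with `m ≡ m' (mod q)`, one has `C(m,k) ≡ C(m',k) (mod p)`. -/
theorem choose_modEq_of_modEq_prime_pow (p r q k m m' : ℕ) (hp : p.Prime)
    (hq : q = p ^ r) (hk : k < q) (hmm : m ≡ m' [MOD q]) :
    Nat.choose m k ≡ Nat.choose m' k [MOD p] := by
  subst hq
  haveI : Fact p.Prime := ⟨hp⟩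
  have h1 := Choose.choose_modEq_choose_mul_prod_range_choose (n := m) (k := k) (p := p) r
  have h2 := Choose.choose_modEq_choose_mul_prod_range_choose (n := m') (k := k) (p := p) r
  have hk0 : k / p ^ r = 0 := Nat.div_eq_of_lt hk
  have key : ∀ i ∈ Finset.range r,
      (m / p ^ i % p).choose (k / p ^ i % p) = (m' / p ^ i % p).choose (k / p ^ i % p) := by
    intro i hi
    have hdvd : p ^ (i + 1) ∣ p ^ r := pow_dvd_pow p (Finset.mem_range.mp hi)
    have hmod : m % p ^ (i + 1) = m' % p ^ (i + 1) := hmm.of_dvd hdvd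
    congr 1
    rw [Nat.mod_def m, Nat.mod_def m'] at hmod
    rw [← Nat.mod_mul_right_div_self, ← Nat.mod_mul_right_div_self, ← pow_succ,
      Nat.ModEq.of_dvd hdvd hmm]
  have hprod : (∏ i ∈ Finset.range r, (m / p ^ i % p).choose (k / p ^ i % p)) =
      ∏ i ∈ Finset.range r, (m' / p ^ i % p).choose (k / p ^ i % p) :=
    Finset.prod_congr rfl key
  rw [← Int.natCast_modEq_iff]
  calc (m.choose k : ℤ) ≡ _ [ZMOD p] := h1
    _ = _ := by rw [hk0, hprod]; simp
    _ ≡ (m'.choose k : ℤ) [ZMOD p] := h2.symm
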